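/- The diagonal entries of the Pauli-twirled POVM elements satisfy ⟨y|Π_x^{Pauli}|y⟩ = Σ_{s∈{0,1}^n} (−1)^{(x⊕y)·s} m_s, where m_s = [M]_{ss} are the diagonal PTM entries of the original measurement channel indexed by Z-type Pauli words Z[s]. Consequently ⟨y|Π_x^{Pauli}|y⟩ depends only on x⊕y. -/

import Mathlib

open ComplexOrder Matrix Finset

/-- Single-qubit Pauli matrix `i^{ax·az} X^{ax} Z^{az}`:
`(false,false) = I`, `(true,false) = X`, `(false,true) = Z`, `(true,true) = Y`. -/
noncomputable def pauli1 (ax az : Bool) : Matrix Bool Bool ℂ := fun x y =>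
  match ax, az with
  | false, false => if x = y then 1 else 0
  | true,  false => if x = y then 0 else 1
  | false, true  => if x = y then (if x then -1 else 1) else 0
  | true,  true  => if x = false ∧ y = true then -Complex.I
                    else if x = true ∧ y = false then Complex.I else 0

/-- The `n`-qubit Pauli word with X-part `a` and Z-part `b`. -/
noncomputable def pauliW {n : ℕ} (a b : Fin n → Bool) :
    Matrix (Fin n → Bool) (Fin n → Bool) ℂ :=
  fun x y => ∏ i, pauli1 (a i) (b i) (x i) (y i)

/-- The measurement channel of a POVM `{Pm x}`. -/
noncomputable def mchan {n : ℕ}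
    (Pm : (Fin n → Bool) → Matrix (Fin n → Bool) (Fin n → Bool) ℂ)
    (ρ : Matrix (Fin n → Bool) (Fin n → Bool) ℂ) :
    Matrix (Fin n → Bool) (Fin n → Bool) ℂ :=
  ∑ x, (Pm x * ρ).trace • Matrix.single x x (1 : ℂ)

/-- Bitwise inner product. -/
def bdot {n : ℕ} (s x : Fin n → Bool) : ℕ := (Finset.univ.filter fun i => s i ∧ x i).card

lemma pauli1_mul (ax az x y w : Bool) :
    pauli1 ax az x y * pauli1 ax az y w
      = if x = xor ax y ∧ w = xor ax y then 1 else 0 := by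
  cases ax <;> cases az <;> cases x <;> cases y <;> cases w <;>
    simp [pauli1, Complex.I_mul_I]

lemma pauliW_mul_entry {n : ℕ} (a b : Fin n → Bool) (u z v : Fin n → Bool) :
    pauliW a b u z * pauliW a b z v
      = if u = (fun i => xor (a i) (z i)) ∧ v = (fun i => xor (a i) (z i)) then 1 else 0 := by
  simp only [pauliW, ← Finset.prod_mul_distrib, pauli1_mul]
  rw [Finset.prod_boole]
  simp [funext_iff, forall_and]

lemma mchan_apply {n : ℕ} (Pm : (Fin n → Bool) → Matrix (Fin n → Bool) (Fin n → Bool) ℂ)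
    (ρ : Matrix (Fin n → Bool) (Fin n → Bool) ℂ) (u v : Fin n → Bool) :
    mchan Pm ρ u v = if u = v then (Pm u * ρ).trace else 0 := by
  simp [mchan, Matrix.sum_apply, Matrix.single, Matrix.smul_apply, ite_and]

lemma trace_mul_std {n : ℕ} (A : Matrix (Fin n → Bool) (Fin n → Bool) ℂ) (w : Fin n → Bool) :
    (A * Matrix.single w w (1:ℂ)).trace = A w w := by
  simp [Matrix.trace, Matrix.diag, Matrix.mul_apply, Matrix.single, ite_and]

lemma mchan_diag {n : ℕ} (Pm : (Fin n → Bool) → Matrix (Fin n → Bool) (Fin n → Bool) ℂ)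
    (ρ : Matrix (Fin n → Bool) (Fin n → Bool) ℂ) :
    mchan Pm ρ = Matrix.diagonal (fun u => (Pm u * ρ).trace) := by
  ext u v
  rw [mchan_apply, Matrix.diagonal_apply]

lemma conj_std {n : ℕ} (a b z : Fin n → Bool) :
    pauliW a b * Matrix.single z z (1:ℂ) * pauliW a b
      = Matrix.single (fun i => xor (a i) (z i)) (fun i => xor (a i) (z i)) (1:ℂ) := by
  ext u v
  simp only [Matrix.mul_apply, Matrix.single, Matrix.of_apply, ite_and, mul_ite,
    ite_mul, one_mul, mul_one, zero_mul, mul_zero, Finset.sum_ite_eq, Finset.sum_ite_eq',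
    Finset.mem_univ, if_true]
  rw [pauliW_mul_entry]
  simp [eq_comm, ite_and]

lemma bool_xor_swap : ∀ p q r : Bool, (p = xor q r) ↔ (r = xor q p) := by decide

lemma conj_diagonal_apply {n : ℕ} (a b : Fin n → Bool) (d : (Fin n → Bool) → ℂ)
    (x : Fin n → Bool) :
    (pauliW a b * Matrix.diagonal d * pauliW a b) x x = d (fun i => xor (a i) (x i)) := by
  have h : ∀ j : Fin n → Bool,
      (x = fun i => xor (a i) (j i)) ↔ (j = fun i => xor (a i) (x i)) := by
    intro j
    simp only [funext_iff]
    exact forall_congr' fun i => bool_xor_swap _ _ _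
  calc (pauliW a b * Matrix.diagonal d * pauliW a b) x x
      = ∑ j, d j * (pauliW a b x j * pauliW a b j x) := by
        simp only [Matrix.mul_apply]
        refine Finset.sum_congr rfl fun j _ => ?_
        simp only [Matrix.diagonal_apply, mul_ite, mul_zero, Finset.sum_ite_eq',
          Finset.mem_univ, if_true]
        ring
    _ = ∑ j, d j * (if j = (fun i => xor (a i) (x i)) then 1 else 0) := by
        refine Finset.sum_congr rfl fun j _ => ?_
        rw [pauliW_mul_entry]
        simp [h j]
    _ = d (fun i => xor (a i) (x i)) := by simp

lemma key {n : ℕ}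
    (Pm PmP : (Fin n → Bool) → Matrix (Fin n → Bool) (Fin n → Bool) ℂ)
    (hP : ∀ ρ, mchan PmP ρ
        = ((1 : ℂ) / 4 ^ n) •
            ∑ a, ∑ b, pauliW a b * mchan Pm (pauliW a b * ρ * pauliW a b) * pauliW a b)
    (x y : Fin n → Bool) :
    PmP x y y = ((1 : ℂ) / 2 ^ n) *
      ∑ z, Pm z (fun k => xor (z k) (xor (x k) (y k))) (fun k => xor (z k) (xor (x k) (y k))) := by
  have h1 : PmP x y y = mchan PmP (Matrix.single y y (1:ℂ)) x x := by
    rw [mchan_apply, if_pos rfl, trace_mul_std]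
  rw [h1, hP]
  simp only [Matrix.smul_apply, Matrix.sum_apply, smul_eq_mul, conj_std,
    mchan_diag, conj_diagonal_apply, trace_mul_std]
  have hre : ∑ a : Fin n → Bool,
        Pm (fun k => xor (a k) (x k)) (fun k => xor (a k) (y k)) (fun k => xor (a k) (y k))
      = ∑ z : Fin n → Bool,
        Pm z (fun k => xor (z k) (xor (x k) (y k))) (fun k => xor (z k) (xor (x k) (y k))) := by
    refine Fintype.sum_bijective (fun a => fun k => xor (a k) (x k))
      (Function.Involutive.bijective fun a => ?_) _ _ fun a => ?_
    · funext k; simp [Bool.xor_assoc]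
    · have h2 : (fun k => xor (xor (a k) (x k)) (xor (x k) (y k)))
          = fun k => xor (a k) (y k) := by
        funext k; cases a k <;> cases x k <;> cases y k <;> rfl
      simp only [h2]
  rw [← hre]
  rw [Finset.sum_comm]
  simp only [Finset.sum_const, Finset.card_univ, nsmul_eq_mul]
  have hcard : (Fintype.card (Fin n → Bool) : ℂ) = 2 ^ n := by
    simp [Fintype.card_fun]
  rw [hcard]
  have h4 : (4:ℂ) ^ n = 2 ^ n * 2 ^ n := by rw [← mul_pow]; norm_num
  have h2 : (2:ℂ) ^ n ≠ 0 := by positivity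
  rw [h4]; field_simp

lemma neg_one_pow_bdot {n : ℕ} (s u : Fin n → Bool) :
    ((-1:ℂ)) ^ bdot s u = ∏ i, if s i ∧ u i then (-1:ℂ) else 1 := by
  rw [bdot, Finset.prod_ite, Finset.prod_const, Finset.prod_const, one_pow, mul_one]

lemma sgn_mul {n : ℕ} (s u v : Fin n → Bool) :
    (∏ i, if s i ∧ u i then (-1:ℂ) else 1) * (∏ i, if s i ∧ v i then (-1:ℂ) else 1)
      = ∏ i, if s i ∧ xor (u i) (v i) then (-1:ℂ) else 1 := by
  rw [← Finset.prod_mul_distrib]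
  refine Finset.prod_congr rfl fun i _ => ?_
  cases s i <;> cases u i <;> cases v i <;> simp

lemma sgn_orth {n : ℕ} (t : Fin n → Bool) :
    ∑ s : Fin n → Bool, (∏ i, if s i ∧ t i then (-1:ℂ) else 1)
      = if t = (fun _ => false) then (2:ℂ) ^ n else 0 := by
  rw [← Fintype.piFinset_univ,
    Finset.sum_prod_piFinset (Finset.univ : Finset Bool)
      (fun i b => if b ∧ t i then (-1:ℂ) else 1)]
  have h : ∀ i, (∑ b : Bool, if b ∧ t i then (-1:ℂ) else 1) = if t i then 0 else 2 := by
    intro i; cases t i <;> simp [Fintype.sum_bool]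
  simp only [h]
  by_cases ht : t = fun _ => false
  · subst ht; simp
  · rw [if_neg ht]
    obtain ⟨i, hi⟩ : ∃ i, t i = true := by
      by_contra hc; push_neg at hc
      exact ht (funext fun i => by simpa using hc i)
    exact Finset.prod_eq_zero (Finset.mem_univ i) (by simp [hi])

lemma pauliW_zero {n : ℕ} (s : Fin n → Bool) :
    pauliW (fun _ => false) s
      = Matrix.diagonal (fun u => ∏ i, if s i ∧ u i then (-1:ℂ) else 1) := by
  ext u v
  have h1 : ∀ i : Fin n, pauli1 false (s i) (u i) (v i)
      = if u i = v i then (if s i ∧ u i then (-1:ℂ) else 1) else 0 := by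
    intro i; cases s i <;> cases u i <;> cases v i <;> simp [pauli1]
  simp only [pauliW, h1, Matrix.diagonal_apply]
  by_cases h : u = v
  · subst h; simp
  · rw [if_neg h]
    obtain ⟨i, hi⟩ : ∃ i, u i ≠ v i := by
      by_contra hc; push_neg at hc; exact h (funext hc)
    exact Finset.prod_eq_zero (Finset.mem_univ i) (by simp [hi])

lemma trace_mul_diagonal' {n : ℕ} (A : Matrix (Fin n → Bool) (Fin n → Bool) ℂ)
    (d : (Fin n → Bool) → ℂ) : (A * Matrix.diagonal d).trace = ∑ u, A u u * d u := by
  simp [Matrix.trace, Matrix.diag, Matrix.mul_diagonal]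

lemma m_s_eq {n : ℕ} (Pm : (Fin n → Bool) → Matrix (Fin n → Bool) (Fin n → Bool) ℂ)
    (s : Fin n → Bool) :
    (pauliW (fun _ => false) s * mchan Pm (pauliW (fun _ => false) s)).trace
      = ∑ z, ∑ u, (∏ i, if s i ∧ z i then (-1:ℂ) else 1) *
          ((∏ i, if s i ∧ u i then (-1:ℂ) else 1) * Pm z u u) := by
  rw [pauliW_zero, mchan_diag, Matrix.diagonal_mul_diagonal, Matrix.trace_diagonal]
  refine Finset.sum_congr rfl fun z _ => ?_
  simp only [Pi.mul_apply, trace_mul_diagonal', Finset.mul_sum]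
  refine Finset.sum_congr rfl fun u _ => by ring

lemma bool_triple : ∀ p q r : Bool, (xor (xor p q) r = false) ↔ (r = xor q p) := by decide

lemma fourier_sgn {n : ℕ} (Pm : (Fin n → Bool) → Matrix (Fin n → Bool) (Fin n → Bool) ℂ)
    (d : Fin n → Bool) :
    ∑ s : Fin n → Bool, (∏ i, if s i ∧ d i then (-1:ℂ) else 1) *
        (∑ z, ∑ u, (∏ i, if s i ∧ z i then (-1:ℂ) else 1) *
          ((∏ i, if s i ∧ u i then (-1:ℂ) else 1) * Pm z u u))
      = (2:ℂ) ^ n * ∑ z, Pm z (fun k => xor (z k) (d k)) (fun k => xor (z k) (d k)) := by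
  have step1 : ∀ s : Fin n → Bool,
      (∏ i, if s i ∧ d i then (-1:ℂ) else 1) *
        (∑ z, ∑ u, (∏ i, if s i ∧ z i then (-1:ℂ) else 1) *
          ((∏ i, if s i ∧ u i then (-1:ℂ) else 1) * Pm z u u))
      = ∑ z, ∑ u, (∏ i, if s i ∧ xor (xor (d i) (z i)) (u i) then (-1:ℂ) else 1) * Pm z u u := by
    intro s
    rw [Finset.mul_sum]
    refine Finset.sum_congr rfl fun z _ => ?_
    rw [Finset.mul_sum]
    refine Finset.sum_congr rfl fun u _ => ?_
    calc (∏ i, if s i ∧ d i then (-1:ℂ) else 1) *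
          ((∏ i, if s i ∧ z i then (-1:ℂ) else 1) *
            ((∏ i, if s i ∧ u i then (-1:ℂ) else 1) * Pm z u u))
        = ((∏ i, if s i ∧ d i then (-1:ℂ) else 1) * (∏ i, if s i ∧ z i then (-1:ℂ) else 1)) *
            (∏ i, if s i ∧ u i then (-1:ℂ) else 1) * Pm z u u := by ring
      _ = _ := by rw [sgn_mul, sgn_mul]
  simp only [step1]
  rw [Finset.sum_comm]
  have step2 : ∀ z : Fin n → Bool,
      (∑ s : Fin n → Bool, ∑ u : Fin n → Bool,
          (∏ i, if s i ∧ xor (xor (d i) (z i)) (u i) then (-1:ℂ) else 1) * Pm z u u)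
      = (2:ℂ) ^ n * Pm z (fun k => xor (z k) (d k)) (fun k => xor (z k) (d k)) := by
    intro z
    rw [Finset.sum_comm]
    have step3 : ∀ u : Fin n → Bool,
        (∑ s : Fin n → Bool,
            (∏ i, if s i ∧ xor (xor (d i) (z i)) (u i) then (-1:ℂ) else 1) * Pm z u u)
        = (if u = (fun k => xor (z k) (d k)) then (2:ℂ)^n else 0) * Pm z u u := by
      intro u
      rw [← Finset.sum_mul, sgn_orth]
      congr 1
      have : ((fun i => xor (xor (d i) (z i)) (u i)) = fun _ => false)
          ↔ (u = fun k => xor (z k) (d k)) := by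
        simp only [funext_iff]
        exact forall_congr' fun i => bool_triple _ _ _
      exact if_congr this rfl rfl
    simp only [step3, ite_mul, zero_mul, Finset.sum_ite_eq', Finset.mem_univ, if_true]
  simp only [step2]
  rw [Finset.mul_sum]

lemma neg_one_pow_bdot' {n : ℕ} (d s : Fin n → Bool) :
    ((-1:ℂ)) ^ bdot d s = ∏ i, if s i ∧ d i then (-1:ℂ) else 1 := by
  rw [neg_one_pow_bdot]
  exact Finset.prod_congr rfl fun i _ => if_congr and_comm rfl rfl

/-- The diagonal entries of the Pauli-twirled POVM elements are the `(ℤ/2)^n`-Fourier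
transform of the diagonal PTM entries `m_s = [M]_{ss} = (1/2^n) tr[Z[s] M(Z[s])]`
(indexed by the Z-type Pauli words `Z[s] = pauliW 0 s`), suitably normalized:
`⟨y|PmP_x|y⟩ = (1/2^n) Σ_s (−1)^{(x⊕y)·s} m_s`.
Consequently `⟨y|PmP_x|y⟩` depends only on `x⊕y`. -/
theorem pauli_twirl_diagonal_entries {n : ℕ}
    (Pm PmP : (Fin n → Bool) → Matrix (Fin n → Bool) (Fin n → Bool) ℂ)
    (hpos : ∀ x, (Pm x).PosSemidef) (hsum : ∑ x, Pm x = 1)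
    (hP : ∀ ρ, mchan PmP ρ
        = ((1 : ℂ) / 4 ^ n) •
            ∑ a, ∑ b, pauliW a b * mchan Pm (pauliW a b * ρ * pauliW a b) * pauliW a b) :
    (∀ x y : Fin n → Bool,
        PmP x y y = ((1 : ℂ) / 2 ^ n) *
          ∑ s, (-1 : ℂ) ^ bdot (fun k => xor (x k) (y k)) s *
            (((1 : ℂ) / 2 ^ n) *
              (pauliW (fun _ => false) s * mchan Pm (pauliW (fun _ => false) s)).trace)) ∧
    ∀ x y x' y' : Fin n → Bool,
      (fun k => xor (x k) (y k)) = (fun k => xor (x' k) (y' k)) →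
      PmP x y y = PmP x' y' y' := by
  have hkey := key Pm PmP hP
  constructor
  · intro x y
    rw [hkey x y]
    simp only [neg_one_pow_bdot', m_s_eq]
    have h2 : ∑ s : Fin n → Bool,
          (∏ i, if s i ∧ xor (x i) (y i) then (-1:ℂ) else 1) *
            (((1:ℂ) / 2 ^ n) *
              ∑ z, ∑ u, (∏ i, if s i ∧ z i then (-1:ℂ) else 1) *
                ((∏ i, if s i ∧ u i then (-1:ℂ) else 1) * Pm z u u))
        = ((1:ℂ) / 2 ^ n) * ∑ s : Fin n → Bool,
            (∏ i, if s i ∧ xor (x i) (y i) then (-1:ℂ) else 1) *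
              ∑ z, ∑ u, (∏ i, if s i ∧ z i then (-1:ℂ) else 1) *
                ((∏ i, if s i ∧ u i then (-1:ℂ) else 1) * Pm z u u) := by
      rw [Finset.mul_sum]
      exact Finset.sum_congr rfl fun s _ => by ring
    rw [h2, fourier_sgn Pm (fun k => xor (x k) (y k))]
    have hne : (2:ℂ) ^ n ≠ 0 := by positivity
    field_simp
  · intro x y x' y' hxy
    rw [hkey x y, hkey x' y']
    simp only [funext_iff] at hxy
    simp only [hxy]
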